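/- arXiv:2401.07069 — 2 statements merged into one kernel-verified Lean document; each statement's English description precedes it below -/
import Mathlib

section
/- Let S = S₁ ∪ S₂ ⊆ U_{6n} ∖ {1} with 1 ∉ S = S^{−1}, where every element of S₁ is even and every element of S₂ is odd. Then Cay(U_{6n}, S) is integral if and only if the following hold for all 0 ≤ j ≤ 2n−1 and 0 ≤ k ≤ n−1: (1) χ_j(S), ψ_k(S₁) and ψ_k(S₁²) + ψ_k(S₂²) are integers; and (2) Δ_{ψ_k}(S) = 2(ψ_k(S₁²) + ψ_k(S₂²)) − ψ_k(S₁)² is a perfect square. -/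
open Complex SemidirectProduct Polynomial
open scoped Pointwise

namespace U6nPaper

/-- The inversion automorphism of `Multiplicative (ZMod 3)`. -/
def iota : MulAut (Multiplicative (ZMod 3)) :=
  { toFun := fun x => x⁻¹
    invFun := fun x => x⁻¹
    left_inv := fun x => inv_inv x
    right_inv := fun x => inv_inv x
    map_mul' := fun x y => mul_inv x y }

lemma iota_sq : iota ^ 2 = 1 := by
  ext x
  simp [sq, iota]

/-- The homomorphism `ZMod 2 → Aut(ZMod 3)` sending `1` to inversion. -/
def sgn2 : Multiplicative (ZMod 2) →* MulAut (Multiplicative (ZMod 3)) where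
  toFun x := iota ^ (Multiplicative.toAdd x).val
  map_one' := by simp
  map_mul' x y := by
    simp only [toAdd_mul, ZMod.val_add, ← pow_eq_pow_mod _ iota_sq, pow_add]

/-- The action of `ZMod (2n)` on `ZMod 3` where `r` acts by multiplication by `(-1)^r`. -/
def phi (n : ℕ) : Multiplicative (ZMod (2 * n)) →* MulAut (Multiplicative (ZMod 3)) :=
  sgn2.comp (AddMonoidHom.toMultiplicative
    ((ZMod.castHom ⟨n, rfl⟩ (ZMod 2)).toAddMonoidHom))

/-- The group `U_{6n} = ⟨a, b ∣ a^{2n} = b³ = 1, a⁻¹ba = b⁻¹⟩`, realized as the semidirect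
product `ZMod 3 ⋊ ZMod (2n)`. -/
abbrev U6n (n : ℕ) := Multiplicative (ZMod 3) ⋊[phi n] Multiplicative (ZMod (2 * n))

/-- The generator `a` of `U_{6n}` (of order `2n`). -/
def aU (n : ℕ) : U6n n := inr (Multiplicative.ofAdd (1 : ZMod (2 * n)))

/-- The generator `b` of `U_{6n}` (of order `3`). -/
def bU (n : ℕ) : U6n n := inl (Multiplicative.ofAdd (1 : ZMod 3))

def u6nEquiv (n : ℕ) : U6n n ≃ ZMod 3 × ZMod (2 * n) where
  toFun g := (Multiplicative.toAdd g.left, Multiplicative.toAdd g.right)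
  invFun p := ⟨Multiplicative.ofAdd p.1, Multiplicative.ofAdd p.2⟩
  left_inv g := rfl
  right_inv p := rfl

instance (n : ℕ) [NeZero n] : Fintype (U6n n) :=
  haveI : NeZero (2 * n) := ⟨by have := NeZero.ne n; omega⟩
  Fintype.ofEquiv _ (u6nEquiv n).symm

/-- An element `a^r b^t` of `U_{6n}` (with `0 ≤ r < 2n`) is even if `r` is even. -/
def IsEvenElt {n : ℕ} (g : U6n n) : Prop := Even (Multiplicative.toAdd g.right).val

/-- The Cayley graph of a group `G` with connection set `S`: `g` and `h` are adjacent
iff `h * g⁻¹ ∈ S` (as a simple graph; for `1 ∉ S = S⁻¹` this is the usual notion). -/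
def cayleyGraph {G : Type*} [Group G] (S : Set G) : SimpleGraph G :=
  SimpleGraph.fromRel (fun g h => h * g⁻¹ ∈ S)

open scoped Classical in
/-- The adjacency matrix of a simple graph, over `ℂ`. -/
noncomputable def adjMat {V : Type*} (Γ : SimpleGraph V) : Matrix V V ℂ :=
  fun g h => if Γ.Adj g h then 1 else 0

/-- A simple graph is integral if every eigenvalue of its adjacency matrix is an integer. -/
def IsIntegral {V : Type*} [Fintype V] [DecidableEq V] (Γ : SimpleGraph V) : Prop :=
  ∀ z ∈ spectrum ℂ (adjMat Γ), ∃ m : ℤ, z = (m : ℂ)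

/-- The root of unity `ω = exp(πi/n)`. -/
noncomputable def om (n : ℕ) : ℂ := Complex.exp (Real.pi * Complex.I / n)

/-- The linear character `χ_j` of `U_{6n}`: `χ_j(a^r b^t) = ω^{jr}`. -/
noncomputable def chi (n j : ℕ) (g : U6n n) : ℂ :=
  om n ^ (j * (Multiplicative.toAdd g.right).val)

/-- The degree-two character `ψ_k` of `U_{6n}`: `ψ_k(a^r b^t)` equals `2ω^{kr}` if `r` is even
and `t = 0`, `-ω^{kr}` if `r` is even and `t ∈ {1,2}`, and `0` if `r` is odd. -/
noncomputable def psi (n k : ℕ) (g : U6n n) : ℂ :=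
  if Even (Multiplicative.toAdd g.right).val then
    (if g.left = 1 then 2 else -1) * om n ^ (k * (Multiplicative.toAdd g.right).val)
  else 0

/-- `f(A) = ∑_{s ∈ A} f(s)`. -/
noncomputable def fsum {α : Type*} (f : α → ℂ) (A : Finset α) : ℂ := ∑ s ∈ A, f s

/-- `f(A²) = ∑_{s,t ∈ A} f(s·t)`. -/
noncomputable def fsum2 {α : Type*} [Mul α] (f : α → ℂ) (A : Finset α) : ℂ :=
  ∑ s ∈ A, ∑ t ∈ A, f (s * t)

/-- The Boolean algebra `B(H)` of a group `H`: the smallest family of subsets of `H`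
containing all subgroups and closed under complements, unions and intersections.
`InBoolAlg H s` says `s ∈ B(H)`. -/
inductive InBoolAlg (H : Type*) [Group H] : Set H → Prop where
  | subgroup (K : Subgroup H) : InBoolAlg H (K : Set H)
  | compl {s : Set H} : InBoolAlg H s → InBoolAlg H sᶜ
  | union {s t : Set H} : InBoolAlg H s → InBoolAlg H t → InBoolAlg H (s ∪ t)
  | inter {s t : Set H} : InBoolAlg H s → InBoolAlg H t → InBoolAlg H (s ∩ t)

section Aux
variable {n : ℕ} [NeZero n]

instance : NeZero (2 * n) := ⟨by have := NeZero.ne n; omega⟩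

def rr (g : U6n n) : ℕ := (Multiplicative.toAdd g.right).val
def tt (g : U6n n) : ZMod 3 := Multiplicative.toAdd g.left

lemma phi_apply (x : Multiplicative (ZMod (2*n))) (y : Multiplicative (ZMod 3)) :
    phi n x y = if Even (Multiplicative.toAdd x).val then y else y⁻¹ := by
  have h1 : phi n x = iota ^ (((Multiplicative.toAdd x).val : ZMod 2)).val := by
    simp [phi, sgn2, ZMod.natCast_val]
  rw [h1, ZMod.val_natCast, ← pow_eq_pow_mod _ iota_sq]
  rcases Nat.even_or_odd (Multiplicative.toAdd x).val with h | h
  · rw [if_pos h]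
    obtain ⟨k, hk⟩ := h
    rw [hk, ← two_mul, pow_mul, iota_sq, one_pow]
    rfl
  · rw [if_neg (Nat.not_even_iff_odd.mpr h)]
    obtain ⟨k, hk⟩ := h
    rw [hk, pow_add, pow_mul, iota_sq, one_pow, pow_one, one_mul]
    rfl

lemma mul_rr (g h : U6n n) : rr (g * h) = (rr g + rr h) % (2 * n) := by
  simp [rr, ZMod.val_add]

lemma mul_tt (g h : U6n n) :
    tt (g * h) = if Even (rr g) then tt g + tt h else tt g - tt h := by
  show Multiplicative.toAdd (g.left * phi n g.right h.left) = _
  rw [phi_apply]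
  rcases Nat.even_or_odd (rr g) with hp | hp <;> simp only [rr] at hp
  · rw [if_pos hp, if_pos (c := Even (rr g)) hp]; rfl
  · rw [if_neg (Nat.not_even_iff_odd.mpr hp), if_neg (c := Even (rr g)) (Nat.not_even_iff_odd.mpr hp)]
    show Multiplicative.toAdd g.left + (- Multiplicative.toAdd h.left) = _
    rw [sub_eq_add_neg]; rfl

lemma even_rr_mul (g h : U6n n) : Even (rr (g * h)) ↔ (Even (rr g) ↔ Even (rr h)) := by
  rw [mul_rr, Nat.even_iff, Nat.mod_mod_of_dvd _ ⟨n, rfl⟩, ← Nat.even_iff, Nat.even_add]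

lemma rr_lt (g : U6n n) : rr g < 2 * n := ZMod.val_lt _

lemma rr_one : rr (1 : U6n n) = 0 := by simp [rr]
lemma tt_one : tt (1 : U6n n) = 0 := by simp [tt]

lemma eq_one_iff (g : U6n n) : g = 1 ↔ (tt g = 0 ∧ rr g = 0) := by
  constructor
  · rintro rfl; exact ⟨tt_one, rr_one⟩
  · rintro ⟨h1, h2⟩
    have : Multiplicative.toAdd g.left = 0 := h1
    have h2' : Multiplicative.toAdd g.right = 0 := (ZMod.val_eq_zero _).mp h2
    ext
    · exact this
    · exact h2'

end Aux
section Roots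
variable {n : ℕ} [NeZero n]

lemma exp_frac_ne_one {a b : ℕ} (ha : 0 < a) (hab : a < b) :
    Complex.exp (2 * Real.pi * Complex.I * a / b) ≠ 1 := by
  intro hexp
  rw [Complex.exp_eq_one_iff] at hexp
  obtain ⟨k, hk⟩ := hexp
  have hb0 : (b:ℂ) ≠ 0 := Nat.cast_ne_zero.mpr (by omega)
  have hI : (2 * Real.pi * Complex.I) ≠ 0 := by
    simp [Real.pi_ne_zero, Complex.I_ne_zero]
  have h2 : (a : ℂ) = (k : ℂ) * b := by
    field_simp at hk
    apply mul_left_cancel₀ hI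
    linear_combination (2 * Real.pi * Complex.I) * hk
  have h3 : (a : ℤ) = k * b := by exact_mod_cast h2
  have hbz : (0:ℤ) < b := by exact_mod_cast (by omega : 0 < b)
  rcases le_or_gt k 0 with h | h
  · have : (k:ℤ) * b ≤ 0 := mul_nonpos_of_nonpos_of_nonneg h (le_of_lt hbz)
    omega
  · have : (1:ℤ) * b ≤ k * b := by
      apply mul_le_mul_of_nonneg_right h (le_of_lt hbz)
    simp at this
    omega

lemma om_pow (r : ℕ) : om n ^ r = Complex.exp (2 * Real.pi * Complex.I * r / (2*n)) := by
  rw [om, ← Complex.exp_nat_mul]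
  congr 1
  have hn : (n:ℂ) ≠ 0 := Nat.cast_ne_zero.mpr (NeZero.ne n)
  field_simp

lemma om_pow_2n : om n ^ (2*n) = 1 := by
  rw [om_pow]
  have hn : (2*(n:ℂ)) ≠ 0 := by
    have : (n:ℂ) ≠ 0 := Nat.cast_ne_zero.mpr (NeZero.ne n)
    simp [this]
  have hc : ((2*n:ℕ):ℂ) = 2*(n:ℂ) := by push_cast; ring
  rw [hc, mul_div_assoc, div_self hn, mul_one, Complex.exp_two_pi_mul_I]

lemma om_pow_ne_one {r : ℕ} (h0 : r ≠ 0) (hr : r < 2*n) : om n ^ r ≠ 1 := by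
  rw [om_pow]
  exact_mod_cast exp_frac_ne_one (by omega) hr

lemma om_pow_mod (m : ℕ) : om n ^ m = om n ^ (m % (2*n)) := pow_eq_pow_mod _ om_pow_2n

/-- the primitive cube root of unity. -/
noncomputable def ze : ℂ := Complex.exp (2 * Real.pi * Complex.I / 3)

lemma ze_pow_three : ze ^ 3 = 1 := by
  rw [ze, ← Complex.exp_nat_mul]
  rw [show ((3:ℕ):ℂ) * (2 * Real.pi * Complex.I / 3) = 2 * Real.pi * Complex.I by push_cast; ring,
    Complex.exp_two_pi_mul_I]

lemma ze_ne_one : ze ≠ 1 := by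
  have := exp_frac_ne_one (a := 1) (b := 3) (by omega) (by omega)
  rw [ze]; simpa using this

lemma ze_sum : 1 + ze + ze ^ 2 = 0 := by
  have h : (ze - 1) * (1 + ze + ze ^ 2) = ze ^ 3 - 1 := by ring
  rw [ze_pow_three, sub_self] at h
  rcases mul_eq_zero.mp h with h | h
  · exact absurd (by linear_combination h) ze_ne_one
  · exact h

lemma ze_pow_mod (m : ℕ) : ze ^ m = ze ^ (m % 3) := pow_eq_pow_mod _ ze_pow_three

/-- `e3 x = ζ^x`. -/
noncomputable def e3 (x : ZMod 3) : ℂ := ze ^ x.val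

lemma e3_add (x y : ZMod 3) : e3 (x + y) = e3 x * e3 y := by
  rw [e3, e3, e3, ZMod.val_add, ← ze_pow_mod, pow_add]

lemma e3_zero : e3 0 = 1 := by simp [e3]

lemma e3_neg_mul (x : ZMod 3) : e3 x * e3 (-x) = 1 := by
  rw [← e3_add]; simp [e3_zero]

lemma e3_val_one : ((1 : ZMod 3)).val = 1 := by decide
lemma e3_val_two : ((2 : ZMod 3)).val = 2 := by decide

lemma e3_pair {x : ZMod 3} (h : x ≠ 0) : e3 x + e3 (-x) = -1 := by
  have hx : x = 1 ∨ x = 2 := by revert h; revert x; decide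
  have hn1 : (-1 : ZMod 3) = 2 := by decide
  have hn2 : (-2 : ZMod 3) = 1 := by decide
  rcases hx with rfl | rfl
  · rw [hn1, e3, e3, e3_val_one, e3_val_two]
    linear_combination ze_sum
  · rw [hn2, e3, e3, e3_val_one, e3_val_two]
    linear_combination ze_sum

end Roots
section Rho
variable {n : ℕ} [NeZero n]

lemma om_jrr_mul (j : ℕ) (g h : U6n n) :
    om n ^ (j * rr (g*h)) = om n ^ (j * rr g) * om n ^ (j * rr h) := by
  rw [mul_rr, ← pow_add, ← Nat.left_distrib, om_pow_mod (j * (rr g + rr h)),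
    om_pow_mod (j * ((rr g + rr h) % (2*n)))]
  congr 1
  show j * ((rr g + rr h) % (2*n)) % (2*n) = j * (rr g + rr h) % (2*n)
  conv_lhs => rw [Nat.mul_mod, Nat.mod_mod_of_dvd _ (dvd_refl _), ← Nat.mul_mod]

lemma chi_eq (j : ℕ) (g : U6n n) : chi n j g = om n ^ (j * rr g) := rfl

lemma chi_mul (j : ℕ) (g h : U6n n) : chi n j (g*h) = chi n j g * chi n j h := by
  rw [chi_eq, chi_eq, chi_eq]; exact om_jrr_mul j g h

lemma chi_one (j : ℕ) : chi n j (1 : U6n n) = 1 := by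
  rw [chi_eq, rr_one, Nat.mul_zero, pow_zero]

/-- the 2-dimensional representation. -/
noncomputable def rho (n k : ℕ) (g : U6n n) : Matrix (Fin 2) (Fin 2) ℂ :=
  om n ^ (k * rr g) •
    (if Even (rr g) then !![e3 (tt g), 0; 0, e3 (-(tt g))]
     else !![0, e3 (tt g); e3 (-(tt g)), 0])

lemma rho_mul (k : ℕ) (g h : U6n n) : rho n k (g*h) = rho n k g * rho n k h := by
  rw [rho, rho, rho, smul_mul_smul_comm, ← om_jrr_mul]
  congr 1
  rcases Nat.even_or_odd (rr g) with hg | hg <;>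
    rcases Nat.even_or_odd (rr h) with hh | hh
  · have hgh : Even (rr (g*h)) := (even_rr_mul g h).mpr (by tauto)
    rw [if_pos hgh, if_pos hg, if_pos hh, mul_tt, if_pos hg, Matrix.mul_fin_two]
    simp only [mul_zero, zero_mul, add_zero, zero_add, neg_add]
    rw [e3_add, e3_add]
  · have hh' : ¬ Even (rr h) := Nat.not_even_iff_odd.mpr hh
    have hgh : ¬ Even (rr (g*h)) := by rw [even_rr_mul]; tauto
    rw [if_neg hgh, if_pos hg, if_neg hh', mul_tt, if_pos hg, Matrix.mul_fin_two]
    simp only [mul_zero, zero_mul, add_zero, zero_add, neg_add]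
    rw [e3_add, e3_add]
  · have hg' : ¬ Even (rr g) := Nat.not_even_iff_odd.mpr hg
    have hgh : ¬ Even (rr (g*h)) := by rw [even_rr_mul]; tauto
    rw [if_neg hgh, if_neg hg', if_pos hh, mul_tt, if_neg hg', Matrix.mul_fin_two]
    simp only [mul_zero, zero_mul, add_zero, zero_add, neg_sub, sub_eq_add_neg, neg_add, neg_neg]
    rw [e3_add, e3_add]
  · have hg' : ¬ Even (rr g) := Nat.not_even_iff_odd.mpr hg
    have hh' : ¬ Even (rr h) := Nat.not_even_iff_odd.mpr hh
    have hgh : Even (rr (g*h)) := by rw [even_rr_mul]; tauto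
    rw [if_pos hgh, if_neg hg', if_neg hh', mul_tt, if_neg hg', Matrix.mul_fin_two]
    simp only [mul_zero, zero_mul, add_zero, zero_add, neg_sub, sub_eq_add_neg, neg_add, neg_neg]
    rw [e3_add, e3_add]

lemma rho_one (k : ℕ) : rho n k (1 : U6n n) = 1 := by
  rw [rho, rr_one, tt_one]
  norm_num [e3_zero]
  exact Matrix.one_fin_two.symm

lemma psi_eq (k : ℕ) (g : U6n n) :
    psi n k g = if Even (rr g) then (e3 (tt g) + e3 (-(tt g))) * om n ^ (k * rr g) else 0 := by
  rw [psi]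
  show (if Even (Multiplicative.toAdd g.right).val then (if g.left = 1 then (2:ℂ) else -1) * om n ^ (k * (Multiplicative.toAdd g.right).val) else 0) = if Even (Multiplicative.toAdd g.right).val then (e3 (Multiplicative.toAdd g.left) + e3 (-Multiplicative.toAdd g.left)) * om n ^ (k * (Multiplicative.toAdd g.right).val) else 0
  rcases Nat.even_or_odd (Multiplicative.toAdd g.right).val with hg | hg
  · rw [if_pos hg, if_pos hg]
    congr 1
    rcases eq_or_ne (Multiplicative.toAdd g.left) 0 with ht | ht
    · rw [if_pos (by simpa using ht), ht, neg_zero, e3_zero]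
      norm_num
    · rw [if_neg (by simpa using ht), e3_pair ht]
  · rw [if_neg (Nat.not_even_iff_odd.mpr hg), if_neg (Nat.not_even_iff_odd.mpr hg)]

lemma rho_trace (k : ℕ) (g : U6n n) : Matrix.trace (rho n k g) = psi n k g := by
  rw [rho, psi_eq, Matrix.trace_smul, Matrix.trace]
  rcases Nat.even_or_odd (rr g) with hg | hg
  · rw [if_pos hg, if_pos hg]
    simp only [Matrix.diag, Fin.sum_univ_two]
    simp [smul_eq_mul]
    ring
  · rw [if_neg (Nat.not_even_iff_odd.mpr hg), if_neg (Nat.not_even_iff_odd.mpr hg)]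
    simp [Matrix.diag, Fin.sum_univ_two]

end Rho
section Inversion
variable {n : ℕ} [NeZero n]

lemma geom_zero {x : ℂ} {N : ℕ} (hx : x ≠ 1) (hN : x^N = 1) :
    ∑ i ∈ Finset.range N, x^i = 0 := by
  rw [geom_sum_eq hx, hN, sub_self, zero_div]

lemma chi_sum_eval (g : U6n n) :
    ∑ j ∈ Finset.range (2*n), chi n j g = if rr g = 0 then ((2*n:ℕ):ℂ) else 0 := by
  simp_rw [chi_eq, mul_comm _ (rr g), pow_mul]
  rcases eq_or_ne (rr g) 0 with h0 | h0
  · simp [h0]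
  · rw [if_neg h0]
    apply geom_zero (om_pow_ne_one h0 (rr_lt g))
    rw [← pow_mul, mul_comm, pow_mul, om_pow_2n, one_pow]

lemma psi_sum_eval (g : U6n n) :
    ∑ k ∈ Finset.range n, psi n k g =
      if rr g = 0 then (e3 (tt g) + e3 (-(tt g))) * ((n:ℕ):ℂ) else 0 := by
  rcases Nat.even_or_odd (rr g) with hg | hg
  · simp only [psi_eq, hg, if_true]
    simp_rw [mul_comm _ (rr g), pow_mul, ← Finset.mul_sum]
    rcases eq_or_ne (rr g) 0 with h0 | h0
    · simp [h0]
    · rw [if_neg h0, mul_eq_zero]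
      right
      apply geom_zero (om_pow_ne_one h0 (rr_lt g))
      obtain ⟨m, hm⟩ := hg
      rw [← pow_mul, show rr g * n = (2*n)*m by rw [hm]; ring, pow_mul, om_pow_2n, one_pow]
  · have hg' : ¬ Even (rr g) := Nat.not_even_iff_odd.mpr hg
    have h0 : rr g ≠ 0 := by rintro h; rw [h] at hg'; simp at hg'
    simp [psi_eq, hg', if_neg h0]

lemma inversion (g : U6n n) :
    (∑ j ∈ Finset.range (2*n), chi n j g) + 2 * ∑ k ∈ Finset.range n, psi n k g
      = if g = 1 then ((6*n:ℕ):ℂ) else 0 := by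
  rw [chi_sum_eval, psi_sum_eval]
  rcases eq_or_ne g 1 with rfl | hg
  · rw [if_pos rfl, if_pos rr_one, if_pos rr_one, tt_one]
    simp only [neg_zero, e3_zero]
    push_cast; ring
  · rw [if_neg hg]
    rcases eq_or_ne (rr g) 0 with h0 | h0
    · have ht : tt g ≠ 0 := fun h => hg ((eq_one_iff g).mpr ⟨h, h0⟩)
      rw [if_pos h0, if_pos h0, e3_pair ht]; push_cast; ring
    · rw [if_neg h0, if_neg h0]; ring

/-- matrix-coefficient function of the 2-dim rep -/
noncomputable def coefF (n k : ℕ) (i i' : Fin 2) : (U6n n) → ℂ := fun g => rho n k g i i'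

/-- the spanning set of eigen-generators -/
def Gen (n : ℕ) : Set ((U6n n) → ℂ) :=
  {f | (∃ j < 2*n, f = chi n j) ∨ ∃ k < n, ∃ i i', f = coefF n k i i'}

lemma delta_eq (g0 : U6n n) :
    (fun g => if g = g0 then ((6*n:ℕ):ℂ) else 0) =
      (∑ j ∈ Finset.range (2*n), chi n j g0⁻¹ • chi n j)
      + ∑ k ∈ Finset.range n, ∑ i : Fin 2, ∑ i' : Fin 2,
          (2 * rho n k g0⁻¹ i' i) • coefF n k i i' := by
  funext g
  have key := inversion (g * g0⁻¹)
  have hone : g * g0⁻¹ = 1 ↔ g = g0 := mul_inv_eq_one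
  simp only [Pi.add_apply, Finset.sum_apply, Pi.smul_apply, smul_eq_mul]
  simp only [← hone]
  rw [← key]
  congr 1
  · apply Finset.sum_congr rfl
    intro j _
    rw [chi_mul, mul_comm]
  · rw [Finset.mul_sum]
    apply Finset.sum_congr rfl
    intro k _
    rw [← rho_trace, rho_mul]
    simp only [Matrix.trace, Matrix.diag, Matrix.mul_apply, Fin.sum_univ_two, coefF]
    ring

lemma span_gen_top : Submodule.span ℂ (Gen n) = ⊤ := by
  rw [eq_top_iff]
  intro f _
  have h6n : ((6*n:ℕ):ℂ) ≠ 0 := Nat.cast_ne_zero.mpr (by have := NeZero.ne n; omega)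
  have hdelta : ∀ g0 : U6n n,
      (fun g => if g = g0 then ((6*n:ℕ):ℂ) else 0) ∈ Submodule.span ℂ (Gen n) := by
    intro g0
    rw [delta_eq]
    apply Submodule.add_mem
    · apply Submodule.sum_mem
      intro j hj
      apply Submodule.smul_mem
      apply Submodule.subset_span
      exact Or.inl ⟨j, Finset.mem_range.mp hj, rfl⟩
    · apply Submodule.sum_mem; intro k hk
      apply Submodule.sum_mem; intro i _
      apply Submodule.sum_mem; intro i' _
      apply Submodule.smul_mem
      apply Submodule.subset_span
      exact Or.inr ⟨k, Finset.mem_range.mp hk, i, i', rfl⟩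
  have hf : f = ∑ g0 : U6n n, (f g0 * ((6*n:ℕ):ℂ)⁻¹) •
      (fun g => if g = g0 then ((6*n:ℕ):ℂ) else 0) := by
    funext g
    simp only [Finset.sum_apply, Pi.smul_apply, smul_eq_mul, mul_ite, mul_zero]
    rw [Finset.sum_ite_eq (Finset.univ) g (fun g0 => f g0 * ((6*n:ℕ):ℂ)⁻¹ * ((6*n:ℕ):ℂ))]
    rw [if_pos (Finset.mem_univ g)]
    rw [mul_assoc, inv_mul_cancel₀ h6n, mul_one]
  rw [hf]
  exact Submodule.sum_mem _ (fun g0 _ => Submodule.smul_mem _ _ (hdelta g0))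

end Inversion
section Act
open Matrix
variable {n : ℕ} [NeZero n]

example (n : ℕ) [NeZero n] : DecidableEq (U6n n) := by infer_instance

lemma key_sum (k : ℕ) (g : U6n n) (u w : Fin 2 → ℂ) (T : Finset (U6n n)) :
    ∑ s ∈ T, u ⬝ᵥ ((rho n k s * rho n k g).mulVec w)
      = Matrix.vecMul u (∑ s ∈ T, rho n k s) ⬝ᵥ ((rho n k g).mulVec w) := by
  classical
  induction T using Finset.induction_on with
  | empty => simp
  | insert _ _ h ih =>
      rw [Finset.sum_insert h, Finset.sum_insert h, ih, Matrix.vecMul_add,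
        add_dotProduct]
      congr 1
      rw [← Matrix.mulVec_mulVec, Matrix.dotProduct_mulVec]
end Act
section Act2
open Matrix
variable {n : ℕ} [NeZero n]

/-- the matrix of the connection set under `rho`. -/
noncomputable def MkM (n k : ℕ) (S : Finset (U6n n)) : Matrix (Fin 2) (Fin 2) ℂ :=
  ∑ s ∈ S, rho n k s

/-- matrix-coefficient type eigenfunctions. -/
noncomputable def FF (n k : ℕ) (u w : Fin 2 → ℂ) : U6n n → ℂ :=
  fun g => u ⬝ᵥ ((rho n k g).mulVec w)

variable (S : Finset (U6n n))

lemma adj_iff (h1 : (1 : U6n n) ∉ S) (hinv : S⁻¹ = S) (g h : U6n n) :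
    (cayleyGraph (S : Set (U6n n))).Adj g h ↔ h * g⁻¹ ∈ S := by
  have hS : ∀ x : U6n n, x ∈ S → x⁻¹ ∈ S := by
    intro x hx
    rw [← hinv, Finset.mem_inv']
    simpa using hx
  rw [cayleyGraph, SimpleGraph.fromRel_adj]
  constructor
  · rintro ⟨hne, hmem | hmem⟩
    · exact hmem
    · have := hS _ hmem
      simpa [_root_.mul_inv_rev] using this
  · intro hmem
    refine ⟨?_, Or.inl hmem⟩
    rintro rfl
    rw [mul_inv_cancel] at hmem
    exact h1 hmem

lemma mulVec_adj (h1 : (1 : U6n n) ∉ S) (hinv : S⁻¹ = S) (f : U6n n → ℂ) (g : U6n n) :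
    (adjMat (cayleyGraph (S : Set (U6n n)))).mulVec f g = ∑ s ∈ S, f (s * g) := by
  classical
  simp only [Matrix.mulVec, dotProduct, adjMat]
  have hterm : ∀ h : U6n n,
      (if (cayleyGraph (S : Set (U6n n))).Adj g h then (1:ℂ) else 0) * f h
        = if h * g⁻¹ ∈ S then f h else 0 := by
    intro h
    by_cases hc : h * g⁻¹ ∈ S
    · rw [if_pos ((adj_iff S h1 hinv g h).mpr hc), if_pos hc, one_mul]
    · rw [if_neg (fun hadj => hc ((adj_iff S h1 hinv g h).mp hadj)), if_neg hc, zero_mul]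
  simp_rw [hterm]
  have := Fintype.sum_equiv (Equiv.mulRight g)
    (fun s : U6n n => if s ∈ S then f (s * g) else 0)
    (fun h : U6n n => if h * g⁻¹ ∈ S then f h else 0)
    (by intro s; simp)
  rw [← this, Finset.sum_ite_mem, Finset.univ_inter]

lemma chi_mulVec (h1 : (1 : U6n n) ∉ S) (hinv : S⁻¹ = S) (j : ℕ) :
    (adjMat (cayleyGraph (S : Set (U6n n)))).mulVec (chi n j)
      = fsum (chi n j) S • chi n j := by
  funext g
  rw [mulVec_adj S h1 hinv]
  simp only [Pi.smul_apply, smul_eq_mul, fsum, Finset.sum_mul]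
  apply Finset.sum_congr rfl
  intro s _
  rw [chi_mul]

lemma FF_mulVec (h1 : (1 : U6n n) ∉ S) (hinv : S⁻¹ = S) (k : ℕ) (u w : Fin 2 → ℂ) :
    (adjMat (cayleyGraph (S : Set (U6n n)))).mulVec (FF n k u w)
      = FF n k (Matrix.vecMul u (MkM n k S)) w := by
  funext g
  rw [mulVec_adj S h1 hinv]
  simp only [FF]
  calc ∑ s ∈ S, u ⬝ᵥ ((rho n k (s * g)).mulVec w)
      = ∑ s ∈ S, u ⬝ᵥ ((rho n k s * rho n k g).mulVec w) := by
        apply Finset.sum_congr rfl; intro s _; rw [rho_mul]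
    _ = Matrix.vecMul u (MkM n k S) ⬝ᵥ ((rho n k g).mulVec w) := key_sum k g u w S

end Act2
section TwoByTwo
open Matrix

lemma ch2 (M : Matrix (Fin 2) (Fin 2) ℂ) :
    M * M - (Matrix.trace M) • M + (M.det) • (1 : Matrix (Fin 2) (Fin 2) ℂ) = 0 := by
  ext i j
  fin_cases i <;> fin_cases j <;>
    simp [Matrix.mul_apply, Fin.sum_univ_two, Matrix.trace_fin_two, Matrix.det_fin_two,
      Matrix.one_apply] <;> ring

lemma trace_sq (M : Matrix (Fin 2) (Fin 2) ℂ) :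
    Matrix.trace (M * M) = (Matrix.trace M)^2 - 2 * M.det := by
  simp [Matrix.trace_fin_two, Matrix.det_fin_two, Matrix.mul_apply, Fin.sum_univ_two]
  ring

lemma left_eig (M : Matrix (Fin 2) (Fin 2) ℂ) (z : ℂ)
    (hz : z^2 - Matrix.trace M * z + M.det = 0) :
    ∃ u : Fin 2 → ℂ, u ≠ 0 ∧ Matrix.vecMul u M = z • u := by
  rw [Matrix.trace_fin_two, Matrix.det_fin_two] at hz
  by_cases h1 : M 1 0 = 0 ∧ z = M 0 0
  · by_cases h2 : M 0 1 = 0 ∧ z = M 1 1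
    · refine ⟨![1, 0], ?_, ?_⟩
      · intro h; simpa using congrFun h 0
      · ext i
        fin_cases i <;>
          simp [Matrix.vecMul, dotProduct, Fin.sum_univ_two, h1.1, h2.1, h1.2]
    · refine ⟨![z - M 1 1, M 0 1], ?_, ?_⟩
      · intro h
        apply h2
        have h0 := congrFun h 0
        have hh1 := congrFun h 1
        simp at h0 hh1
        exact ⟨hh1, by linear_combination h0⟩
      · ext i
        fin_cases i <;>
          simp [Matrix.vecMul, dotProduct, Fin.sum_univ_two] <;> first | linear_combination hz | linear_combination -hz | linear_combination 2*hz | linear_combination -2*hz | ring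
  · refine ⟨![M 1 0, z - M 0 0], ?_, ?_⟩
    · intro h
      apply h1
      have h0 := congrFun h 0
      have hh1 := congrFun h 1
      simp at h0 hh1
      exact ⟨h0, by linear_combination hh1⟩
    · ext i
      fin_cases i <;>
        simp [Matrix.vecMul, dotProduct, Fin.sum_univ_two] <;> first | linear_combination hz | linear_combination -hz | linear_combination 2*hz | linear_combination -2*hz | ring

end TwoByTwo
section Spec
open Matrix
variable {n : ℕ} [NeZero n]

lemma eigen_mem_spectrum (A : Matrix (U6n n) (U6n n) ℂ) (z : ℂ) (v : U6n n → ℂ)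
    (hv : v ≠ 0) (h : A.mulVec v = z • v) : z ∈ spectrum ℂ A := by
  classical
  rw [← AlgEquiv.spectrum_eq
    (Matrix.toLinAlgEquiv' : Matrix (U6n n) (U6n n) ℂ ≃ₐ[ℂ] _) A,
    ← Module.End.hasEigenvalue_iff_mem_spectrum]
  exact Module.End.hasEigenvalue_of_hasEigenvector
    ⟨Module.End.mem_eigenspace_iff.mpr (by rw [Matrix.toLinAlgEquiv'_apply, h]), hv⟩

lemma matrix_eq_zero_of_mulVec (A : Matrix (U6n n) (U6n n) ℂ)
    (h : ∀ v, A.mulVec v = 0) : A = 0 := by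
  classical
  ext i j
  simpa [Matrix.mulVec_single] using congrFun (h (Pi.single j 1)) i

lemma eval_eq_zero_of_aeval (A : Matrix (U6n n) (U6n n) ℂ) (q : Polynomial ℂ)
    (hq : (Polynomial.aeval A) q = 0) (z : ℂ) (hz : z ∈ spectrum ℂ A) :
    q.eval z = 0 := by
  have hmem := spectrum.subset_polynomial_aeval A q ⟨z, hz, rfl⟩
  rw [hq, spectrum.zero_eq] at hmem
  simpa using hmem

lemma FF_comb (k : ℕ) (u1 u2 u3 : Fin 2 → ℂ) (a b : ℂ) (w : Fin 2 → ℂ) :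
    FF n k (u1 - a • u2 + b • u3) w
      = FF n k u1 w - a • FF n k u2 w + b • FF n k u3 w := by
  funext g
  simp [FF, sub_dotProduct, add_dotProduct, smul_dotProduct]

lemma FF_smul (k : ℕ) (a : ℂ) (u w : Fin 2 → ℂ) :
    FF n k (a • u) w = a • FF n k u w := by
  funext g
  simp [FF, smul_dotProduct]

lemma rho_aU (k : ℕ) : rho n k (aU n) = (om n ^ k) • !![0,1;1,0] := by
  haveI : Fact (1 < 2*n) := ⟨by have := NeZero.ne n; omega⟩
  have hrr : rr (aU n) = 1 := by
    show (Multiplicative.toAdd (aU n).right).val = 1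
    rw [aU]
    exact ZMod.val_one _
  have htt : tt (aU n) = 0 := rfl
  rw [rho, hrr, htt]
  norm_num [e3_zero]

lemma FF_ne_zero (k : ℕ) (u : Fin 2 → ℂ) (hu : u ≠ 0) :
    FF n k u (Pi.single 0 1) ≠ 0 := by
  intro h
  apply hu
  have h1 : u 0 = 0 := by
    have := congrFun h 1
    simpa [FF, rho_one, Matrix.one_mulVec, dotProduct, Fin.sum_univ_two,
      Pi.single_apply] using this
  have h2 : u 1 = 0 := by
    have := congrFun h (aU n)
    rw [FF, rho_aU] at this
    simp only [Pi.zero_apply] at this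
    have hom : om n ^ k ≠ 0 := pow_ne_zero _ (Complex.exp_ne_zero _)
    simp [Matrix.smul_mulVec, dotProduct, Fin.sum_univ_two, Matrix.mulVec,
      Pi.single_apply, hom] at this
    tauto
  funext i
  fin_cases i
  · exact h1
  · exact h2

lemma coefF_eq_FF (k : ℕ) (i i' : Fin 2) :
    coefF n k i i' = FF n k (Pi.single i 1) (Pi.single i' 1) := by
  funext g
  simp only [coefF, FF, dotProduct, Matrix.mulVec, Fin.sum_univ_two, Pi.single_apply]
  fin_cases i <;> fin_cases i' <;> simp

end Spec
section SpecEq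
open Matrix
variable {n : ℕ} [NeZero n]

lemma FF_add_sub (k : ℕ) (u1 u2 u3 w : Fin 2 → ℂ) :
    FF n k u1 w - FF n k u2 w + FF n k u3 w = FF n k (u1 - u2 + u3) w := by
  funext g
  simp [FF, sub_dotProduct, add_dotProduct]

lemma vec_comb (M : Matrix (Fin 2) (Fin 2) ℂ) (u : Fin 2 → ℂ) :
    Matrix.vecMul u (M*M) - Matrix.trace M • Matrix.vecMul u M + M.det • u
      = Matrix.vecMul u (M*M - Matrix.trace M • M + M.det • (1 : Matrix (Fin 2) (Fin 2) ℂ)) := by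
  funext i
  fin_cases i <;>
    simp [Matrix.vecMul, dotProduct, Fin.sum_univ_two, Matrix.sub_apply,
      Matrix.add_apply, Matrix.smul_apply, Matrix.one_apply, Matrix.mul_apply] <;> ring

lemma FF_zero (k : ℕ) (w : Fin 2 → ℂ) : FF n k 0 w = 0 := by
  funext g; simp [FF]

lemma quad_kill (S : Finset (U6n n)) (h1 : (1 : U6n n) ∉ S) (hinv : S⁻¹ = S) (k : ℕ)
    (u w : Fin 2 → ℂ) :
    ((Polynomial.aeval (adjMat (cayleyGraph (S : Set (U6n n)))))
      (X^2 - C (Matrix.trace (MkM n k S)) * X + C ((MkM n k S).det))).mulVec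
        (FF n k u w) = 0 := by
  set A := adjMat (cayleyGraph (S : Set (U6n n)))
  set M := MkM n k S
  have hFFv : ∀ u w, A.mulVec (FF n k u w) = FF n k (Matrix.vecMul u M) w :=
    FF_mulVec S h1 hinv k
  rw [map_add, map_sub, _root_.map_mul, map_pow, Polynomial.aeval_X, Polynomial.aeval_C,
    Polynomial.aeval_C, Algebra.algebraMap_eq_smul_one, Algebra.algebraMap_eq_smul_one,
    Matrix.add_mulVec, Matrix.sub_mulVec]
  have hA2 : (A^2).mulVec (FF n k u w)
      = FF n k (Matrix.vecMul u (M * M)) w := by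
    rw [sq, ← Matrix.mulVec_mulVec, hFFv, hFFv, Matrix.vecMul_vecMul]
  have hTA : ((Matrix.trace M • (1 : Matrix (U6n n) (U6n n) ℂ)) * A).mulVec (FF n k u w)
      = FF n k (Matrix.trace M • Matrix.vecMul u M) w := by
    rw [smul_mul_assoc, one_mul, Matrix.smul_mulVec, hFFv, ← FF_smul]
  have hD : ((M.det • (1 : Matrix (U6n n) (U6n n) ℂ))).mulVec (FF n k u w)
      = FF n k (M.det • u) w := by
    rw [Matrix.smul_mulVec, Matrix.one_mulVec, ← FF_smul]
  rw [hA2, hTA, hD, FF_add_sub, vec_comb, ch2, Matrix.vecMul_zero, FF_zero]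

lemma spec_eq (S : Finset (U6n n)) (h1 : (1 : U6n n) ∉ S) (hinv : S⁻¹ = S) :
    spectrum ℂ (adjMat (cayleyGraph (S : Set (U6n n)))) =
      {z | (∃ j < 2*n, z = fsum (chi n j) S) ∨
           ∃ k < n, z^2 - Matrix.trace (MkM n k S) * z + (MkM n k S).det = 0} := by
  classical
  set A := adjMat (cayleyGraph (S : Set (U6n n))) with hA
  set q : Polynomial ℂ :=
    (∏ j ∈ Finset.range (2*n), (X - C (fsum (chi n j) S))) *
    (∏ k ∈ Finset.range n, (X^2 - C (Matrix.trace (MkM n k S)) * X + C ((MkM n k S).det)))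
    with hq
  have hchiv : ∀ j, A.mulVec (chi n j) = fsum (chi n j) S • chi n j :=
    chi_mulVec S h1 hinv
  have hFFv : ∀ k u w, A.mulVec (FF n k u w) = FF n k (Matrix.vecMul u (MkM n k S)) w :=
    FF_mulVec S h1 hinv
  -- aeval A q = 0
  have haq : (Polynomial.aeval A) q = 0 := by
    apply matrix_eq_zero_of_mulVec
    have hgen : ∀ f ∈ Gen n, ((Polynomial.aeval A) q).mulVec f = 0 := by
      rintro f (⟨j, hj, rfl⟩ | ⟨k, hk, i, i', rfl⟩)
      · have hfac : q = ((∏ j' ∈ (Finset.range (2*n)).erase j, (X - C (fsum (chi n j') S))) *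
            (∏ k ∈ Finset.range n,
              (X^2 - C (Matrix.trace (MkM n k S)) * X + C ((MkM n k S).det))))
            * (X - C (fsum (chi n j) S)) := by
          rw [hq, ← Finset.prod_erase_mul _ _ (Finset.mem_range.mpr hj)]
          ring
        rw [hfac, _root_.map_mul, ← Matrix.mulVec_mulVec]
        have : ((Polynomial.aeval A) (X - C (fsum (chi n j) S))).mulVec (chi n j) = 0 := by
          rw [map_sub, Polynomial.aeval_X, Polynomial.aeval_C,
            Algebra.algebraMap_eq_smul_one, Matrix.sub_mulVec, hchiv,
            Matrix.smul_mulVec, Matrix.one_mulVec, sub_self]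
        rw [this, Matrix.mulVec_zero]
      · have hfac : q = ((∏ j ∈ Finset.range (2*n), (X - C (fsum (chi n j) S))) *
            (∏ k' ∈ (Finset.range n).erase k,
              (X^2 - C (Matrix.trace (MkM n k' S)) * X + C ((MkM n k' S).det))))
            * (X^2 - C (Matrix.trace (MkM n k S)) * X + C ((MkM n k S).det)) := by
          rw [hq, ← Finset.prod_erase_mul _ _ (Finset.mem_range.mpr hk)]
          ring
        rw [hfac, _root_.map_mul, ← Matrix.mulVec_mulVec]
        have : ((Polynomial.aeval A)
            (X^2 - C (Matrix.trace (MkM n k S)) * X + C ((MkM n k S).det))).mulVec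
            (coefF n k i i') = 0 := by
          rw [coefF_eq_FF]
          exact quad_kill S h1 hinv k _ _
        rw [this, Matrix.mulVec_zero]
    intro v
    have hv : v ∈ Submodule.span ℂ (Gen n) := by rw [span_gen_top]; trivial
    induction hv using Submodule.span_induction with
    | mem f hf => exact hgen f hf
    | zero => exact Matrix.mulVec_zero _
    | add f g _ _ hf hg => rw [Matrix.mulVec_add, hf, hg, add_zero]
    | smul a f _ hf => rw [Matrix.mulVec_smul, hf, smul_zero]
  ext z
  simp only [Set.mem_setOf_eq]
  constructor
  · intro hz
    have h0 := eval_eq_zero_of_aeval A q haq _ hz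
    rw [hq] at h0
    simp only [Polynomial.eval_mul, Polynomial.eval_prod, Polynomial.eval_add,
      Polynomial.eval_sub, Polynomial.eval_pow, Polynomial.eval_X, Polynomial.eval_C,
      mul_eq_zero] at h0
    rcases h0 with h0 | h0 <;> rw [Finset.prod_eq_zero_iff] at h0 <;>
      obtain ⟨j, hj, hj0⟩ := h0
    · exact Or.inl ⟨j, Finset.mem_range.mp hj, by linear_combination hj0⟩
    · exact Or.inr ⟨j, Finset.mem_range.mp hj, by linear_combination hj0⟩
  · rintro (⟨j, hj, rfl⟩ | ⟨k, hk, hroot⟩)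
    · apply eigen_mem_spectrum A _ (chi n j) _ (hchiv j)
      intro h
      have := congrFun h 1
      rw [chi_one] at this
      simpa using this
    · obtain ⟨u, hu, huM⟩ := left_eig (MkM n k S) _ hroot
      apply eigen_mem_spectrum A _ (FF n k u (Pi.single 0 1)) (FF_ne_zero k u hu)
      rw [hFFv, huM, FF_smul]

end SpecEq
section Traces
open Matrix
variable {n : ℕ} [NeZero n]

lemma psi_zero_of_odd (k : ℕ) {g : U6n n} (h : ¬ Even (rr g)) : psi n k g = 0 := by
  rw [psi_eq, if_neg h]

lemma trace_MkM (S₁ S₂ : Finset (U6n n)) (hS₁ : ∀ g ∈ S₁, IsEvenElt g)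
    (hS₂ : ∀ g ∈ S₂, ¬ IsEvenElt g) (k : ℕ) :
    Matrix.trace (MkM n k (S₁ ∪ S₂)) = fsum (psi n k) S₁ := by
  have hdisj : Disjoint S₁ S₂ := by
    rw [Finset.disjoint_left]
    intro a ha hb
    exact hS₂ a hb (hS₁ a ha)
  rw [MkM, Matrix.trace_sum]
  simp_rw [rho_trace]
  rw [Finset.sum_union hdisj, fsum]
  have : ∑ s ∈ S₂, psi n k s = 0 := by
    apply Finset.sum_eq_zero
    intro s hs
    exact psi_zero_of_odd k (hS₂ s hs)
  rw [this, add_zero]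

lemma trace_MkM_sq (S₁ S₂ : Finset (U6n n)) (hS₁ : ∀ g ∈ S₁, IsEvenElt g)
    (hS₂ : ∀ g ∈ S₂, ¬ IsEvenElt g) (k : ℕ) :
    Matrix.trace (MkM n k (S₁ ∪ S₂) * MkM n k (S₁ ∪ S₂))
      = fsum2 (psi n k) S₁ + fsum2 (psi n k) S₂ := by
  have hdisj : Disjoint S₁ S₂ := by
    rw [Finset.disjoint_left]
    intro a ha hb
    exact hS₂ a hb (hS₁ a ha)
  have hgen : Matrix.trace (MkM n k (S₁ ∪ S₂) * MkM n k (S₁ ∪ S₂))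
      = ∑ s ∈ S₁ ∪ S₂, ∑ t ∈ S₁ ∪ S₂, psi n k (s * t) := by
    rw [MkM, Finset.sum_mul_sum, Matrix.trace_sum]
    apply Finset.sum_congr rfl
    intro s _
    rw [Matrix.trace_sum]
    apply Finset.sum_congr rfl
    intro t _
    rw [← rho_mul, rho_trace]
  rw [hgen, Finset.sum_union hdisj]
  have hcross1 : ∀ s ∈ S₁, ∑ t ∈ S₂, psi n k (s * t) = 0 := by
    intro s hs
    apply Finset.sum_eq_zero
    intro t ht
    apply psi_zero_of_odd
    rw [even_rr_mul]
    have h1 : Even (rr s) := hS₁ s hs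
    have h2 : ¬ Even (rr t) := hS₂ t ht
    tauto
  have hcross2 : ∀ s ∈ S₂, ∑ t ∈ S₁, psi n k (s * t) = 0 := by
    intro s hs
    apply Finset.sum_eq_zero
    intro t ht
    apply psi_zero_of_odd
    rw [even_rr_mul]
    have h1 : ¬ Even (rr s) := hS₂ s hs
    have h2 : Even (rr t) := hS₁ t ht
    tauto
  have e1 : ∑ s ∈ S₁, ∑ t ∈ S₁ ∪ S₂, psi n k (s * t) = fsum2 (psi n k) S₁ := by
    rw [fsum2]
    apply Finset.sum_congr rfl
    intro s hs
    rw [Finset.sum_union hdisj, hcross1 s hs, add_zero]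
  have e2 : ∑ s ∈ S₂, ∑ t ∈ S₁ ∪ S₂, psi n k (s * t) = fsum2 (psi n k) S₂ := by
    rw [fsum2]
    apply Finset.sum_congr rfl
    intro s hs
    rw [Finset.sum_union hdisj, hcross2 s hs, zero_add]
  rw [e1, e2]

end Traces
/-- Theorem 3.1: integrality criterion for `Cay(U_{6n}, S₁ ∪ S₂)` where `S₁` consists of
even elements and `S₂` of odd elements. -/
theorem integrality_criterion (n : ℕ) [NeZero n] (S₁ S₂ : Finset (U6n n))
    (hS₁ : ∀ g ∈ S₁, IsEvenElt g) (hS₂ : ∀ g ∈ S₂, ¬ IsEvenElt g)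
    (h1 : (1 : U6n n) ∉ S₁ ∪ S₂) (hinv : (S₁ ∪ S₂)⁻¹ = S₁ ∪ S₂) :
    IsIntegral (cayleyGraph ((S₁ ∪ S₂ : Finset (U6n n)) : Set (U6n n))) ↔
      ((∀ j : ℕ, j ≤ 2 * n - 1 → ∃ m : ℤ, fsum (chi n j) (S₁ ∪ S₂) = (m : ℂ)) ∧
       (∀ k : ℕ, k ≤ n - 1 →
         (∃ m : ℤ, fsum (psi n k) S₁ = (m : ℂ)) ∧
         (∃ m : ℤ, fsum2 (psi n k) S₁ + fsum2 (psi n k) S₂ = (m : ℂ)) ∧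
         (∃ m : ℤ, 2 * (fsum2 (psi n k) S₁ + fsum2 (psi n k) S₂)
            - (fsum (psi n k) S₁) ^ 2 = (m : ℂ) ^ 2))) := by



  classical
  have hn1 : 1 ≤ n := Nat.one_le_iff_ne_zero.mpr (NeZero.ne n)
  set S : Finset (U6n n) := S₁ ∪ S₂ with hS
  have hT : ∀ k, Matrix.trace (MkM n k S) = fsum (psi n k) S₁ :=
    trace_MkM S₁ S₂ hS₁ hS₂
  have hT2 : ∀ k, (Matrix.trace (MkM n k S))^2 - 2 * (MkM n k S).det
      = fsum2 (psi n k) S₁ + fsum2 (psi n k) S₂ := by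
    intro k
    rw [← trace_sq, trace_MkM_sq S₁ S₂ hS₁ hS₂]
  have hspec := spec_eq S h1 hinv
  show (∀ z ∈ spectrum ℂ (adjMat (cayleyGraph (S : Set (U6n n)))), ∃ m : ℤ, z = (m:ℂ)) ↔ _
  constructor
  · intro hint
    constructor
    · intro j hj
      apply hint
      rw [hspec]
      exact Or.inl ⟨j, by omega, rfl⟩
    · intro k hk
      have hk' : k < n := by omega
      obtain ⟨e, he⟩ := IsAlgClosed.exists_pow_nat_eq
        ((Matrix.trace (MkM n k S))^2 - 4 * (MkM n k S).det) (two_pos)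
      set tk := Matrix.trace (MkM n k S) with htk
      set dk := (MkM n k S).det with hdk
      have hr1 : ((tk + e)/2)^2 - tk * ((tk + e)/2) + dk = 0 := by
        linear_combination he/4
      have hr2 : ((tk - e)/2)^2 - tk * ((tk - e)/2) + dk = 0 := by
        linear_combination he/4
      obtain ⟨m1, hm1⟩ := hint ((tk + e)/2) (by rw [hspec]; exact Or.inr ⟨k, hk', hr1⟩)
      obtain ⟨m2, hm2⟩ := hint ((tk - e)/2) (by rw [hspec]; exact Or.inr ⟨k, hk', hr2⟩)
      have hsum : (m1:ℂ) + m2 = tk := by rw [← hm1, ← hm2]; ring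
      have hprod : (m1:ℂ) * m2 = dk := by
        rw [← hm1, ← hm2]
        linear_combination (-1/4 : ℂ) * he
      refine ⟨⟨m1 + m2, ?_⟩, ⟨m1^2 + m2^2, ?_⟩, ⟨m1 - m2, ?_⟩⟩
      · rw [← hT k, ← htk]
        push_cast
        linear_combination -hsum
      · rw [← hT2 k, ← htk, ← hdk]
        push_cast
        linear_combination (-(tk + (m1:ℂ) + m2)) * hsum + 2 * hprod
      · rw [← hT2 k, ← hT k, ← htk, ← hdk]
        push_cast
        linear_combination (-(tk + (m1:ℂ) + m2)) * hsum + 4 * hprod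
  · rintro ⟨hchi, hpsi⟩ z hz
    rw [hspec] at hz
    rcases hz with ⟨j, hj, rfl⟩ | ⟨k, hk, hroot⟩
    · exact hchi j (by omega)
    · obtain ⟨⟨mt, hmt⟩, ⟨m2', hm2'⟩, ⟨m, hm⟩⟩ := hpsi k (by omega)
      set tk := Matrix.trace (MkM n k S) with htk
      set dk := (MkM n k S).det with hdk
      have hTk : tk = (mt:ℂ) := by rw [htk, hT k, hmt]
      have hT2k : tk^2 - 2*dk = (m2':ℂ) := by rw [htk, hdk, hT2 k, hm2']
      rw [hm2', hmt] at hm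
      have hM : tk^2 - 4*dk = (m:ℂ)^2 := by
        linear_combination 2*hT2k + hm - (tk + (mt:ℂ))*hTk
      have hsq : (2*z - mt)^2 = (m:ℂ)^2 := by
        linear_combination 4*hroot + (4*z - (tk + (mt:ℂ)))*hTk + hM
      have hfac : (2*z - mt - m) * (2*z - mt + m) = 0 := by linear_combination hsq
      have hintZ : 2*m2' = mt^2 + m^2 := by
        have hC : ((2*m2' : ℤ):ℂ) = ((mt^2 + m^2 : ℤ):ℂ) := by push_cast; linear_combination hm
        exact_mod_cast hC
      have hpar : Even (mt + m) := by
        have h2 : Even (mt^2 + m^2) := ⟨m2', by linarith⟩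
        rw [Int.even_add] at h2 ⊢
        rw [Int.even_pow, Int.even_pow] at h2
        constructor
        · intro hmt'; exact (h2.mp ⟨hmt', by norm_num⟩).1
        · intro hm'; exact (h2.mpr ⟨hm', by norm_num⟩).1
      rcases mul_eq_zero.mp hfac with hcase | hcase
      · obtain ⟨w, hw⟩ := hpar
        refine ⟨w, ?_⟩
        have : (2:ℂ) * z = 2 * w := by
          have hwC : ((mt + m : ℤ):ℂ) = ((w + w : ℤ):ℂ) := by rw [hw]
          push_cast at hwC
          linear_combination hcase + hwC
        exact mul_left_cancel₀ two_ne_zero this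
      · have hpar2 : Even (mt - m) := by
          rw [Int.even_sub]
          rw [Int.even_add] at hpar
          exact hpar
        obtain ⟨w, hw⟩ := hpar2
        refine ⟨w, ?_⟩
        have : (2:ℂ) * z = 2 * w := by
          have hwC : ((mt - m : ℤ):ℂ) = ((w + w : ℤ):ℂ) := by rw [hw]
          push_cast at hwC
          linear_combination hcase + hwC
        exact mul_left_cancel₀ two_ne_zero this

end U6nPaper
end

section
/- Let n > 1 be an integer and S = S₁ ∪ S₂ ⊆ U_{6n}, where S₁ = {a^{2r}, a^{2r}b, a^{2r}b² : 1 ≤ r ≤ n−1} and S₂ = {a^{2h+1}, a^{2h+1}b, a^{2h+1}b² : 0 ≤ h ≤ n−1}. Then Cay(U_{6n}, S) is a connected integral graph, and the characteristic polynomial of its adjacency matrix equals (X+3)^{2n−1} · X^{4n} · (X−(6n−3)). -/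
open Complex SemidirectProduct Polynomial
open scoped Pointwise

namespace U6nPaper

/-! ### Auxiliary lemmas -/

section Aux

open Multiplicative Matrix

lemma aU_pow (n k : ℕ) : aU n ^ k = inr (Multiplicative.ofAdd (k : ZMod (2*n))) := by
  rw [aU, ← map_pow]; congr 1; rw [← ofAdd_nsmul]; congr 1; simp [nsmul_eq_mul]

lemma bU_pow (n t : ℕ) : bU n ^ t = inl (Multiplicative.ofAdd (t : ZMod 3)) := by
  rw [bU, ← map_pow]; congr 1; rw [← ofAdd_nsmul]; congr 1; simp [nsmul_eq_mul]

lemma inr_mul_inl' (n : ℕ) (x : Multiplicative (ZMod (2*n))) (y : Multiplicative (ZMod 3)) :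
    (inr x : U6n n) * inl y = ⟨phi n x y, x⟩ := by ext <;> simp

lemma U6n.decomp {n : ℕ} [NeZero n] (g : U6n n) :
    g = aU n ^ (Multiplicative.toAdd g.right).val *
        bU n ^ (Multiplicative.toAdd ((phi n g.right)⁻¹ g.left)).val := by
  haveI : NeZero (2*n) := ⟨by have := NeZero.ne n; omega⟩
  rw [aU_pow, bU_pow]
  have h1 : ((Multiplicative.toAdd g.right).val : ZMod (2*n)) = Multiplicative.toAdd g.right := by
    simp [ZMod.natCast_val, ZMod.cast_id]
  have h3 : ((Multiplicative.toAdd ((phi n g.right)⁻¹ g.left)).val : ZMod 3)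
      = Multiplicative.toAdd ((phi n g.right)⁻¹ g.left) := by
    simp [ZMod.natCast_val, ZMod.cast_id]
  rw [h1, h3]
  simp only [ofAdd_toAdd]
  rw [inr_mul_inl']
  ext <;> simp

lemma right_aU_pow_mul_bU_pow (n k t : ℕ) :
    (aU n ^ k * bU n ^ t).right = Multiplicative.ofAdd ((k : ZMod (2*n))) := by
  rw [aU_pow, bU_pow, mul_right, right_inr, right_inl, mul_one]

lemma mem_S_iff (n : ℕ) (hn : 1 < n) (S₁ S₂ : Set (U6n n))
    (hS₁ : S₁ = {x | ∃ r : ℕ, 1 ≤ r ∧ r ≤ n - 1 ∧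
      (x = aU n ^ (2 * r) ∨ x = aU n ^ (2 * r) * bU n ∨ x = aU n ^ (2 * r) * bU n ^ 2)})
    (hS₂ : S₂ = {x | ∃ h : ℕ, h ≤ n - 1 ∧
      (x = aU n ^ (2 * h + 1) ∨ x = aU n ^ (2 * h + 1) * bU n ∨
        x = aU n ^ (2 * h + 1) * bU n ^ 2)}) (g : U6n n) :
    g ∈ S₁ ∪ S₂ ↔ g.right ≠ 1 := by
  haveI : NeZero n := ⟨by omega⟩
  haveI : NeZero (2*n) := ⟨by omega⟩
  have key : ∀ m : ℕ, 1 ≤ m → m ≤ 2*n - 1 → ∀ t : ℕ,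
      (aU n ^ m * bU n ^ t).right ≠ 1 := by
    intro m h1 h2 t
    rw [right_aU_pow_mul_bU_pow]
    simp only [ne_eq, ofAdd_eq_one]
    intro h
    rw [ZMod.natCast_eq_zero_iff] at h
    have := Nat.le_of_dvd (by omega) h
    omega
  constructor
  · rintro (h | h)
    · rw [hS₁] at h
      obtain ⟨r, hr1, hr2, (rfl | rfl | rfl)⟩ := h
      · have := key (2*r) (by omega) (by omega) 0; simpa using this
      · have := key (2*r) (by omega) (by omega) 1; simpa using this
      · exact key (2*r) (by omega) (by omega) 2
    · rw [hS₂] at h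
      obtain ⟨hh, hh1, (rfl | rfl | rfl)⟩ := h
      · have := key (2*hh+1) (by omega) (by omega) 0; simpa using this
      · have := key (2*hh+1) (by omega) (by omega) 1; simpa using this
      · exact key (2*hh+1) (by omega) (by omega) 2
  · intro hg
    obtain ⟨k, t, hklt, htlt, hgd⟩ :
        ∃ k t, k < 2*n ∧ t < 3 ∧ g = aU n ^ k * bU n ^ t :=
      ⟨_, _, ZMod.val_lt _, ZMod.val_lt _, U6n.decomp g⟩
    have hkne : k ≠ 0 := by
      rintro rfl
      apply hg
      rw [hgd, right_aU_pow_mul_bU_pow]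
      simp
    have ht3 : t = 0 ∨ t = 1 ∨ t = 2 := by omega
    rcases Nat.even_or_odd k with ⟨r, hr⟩ | ⟨h, hh⟩
    · left
      rw [hS₁]
      refine ⟨r, by omega, by omega, ?_⟩
      rw [hgd, show 2*r = k by omega]
      rcases ht3 with rfl | rfl | rfl
      · left; rw [pow_zero, mul_one]
      · right; left; rw [pow_one]
      · right; right; rfl
    · right
      rw [hS₂]
      refine ⟨h, by omega, ?_⟩
      rw [hgd, show 2*h+1 = k by omega]
      rcases ht3 with rfl | rfl | rfl
      · left; rw [pow_zero, mul_one]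
      · right; left; rw [pow_one]
      · right; right; rfl

lemma cayley_adj_iff {n : ℕ} (S : Set (U6n n)) (hS : ∀ g : U6n n, g ∈ S ↔ g.right ≠ 1)
    (g h : U6n n) : (cayleyGraph S).Adj g h ↔ g.right ≠ h.right := by
  rw [cayleyGraph, SimpleGraph.fromRel_adj]
  constructor
  · rintro ⟨hne, h1 | h1⟩ <;> rw [hS] at h1 <;>
      simp only [mul_right, inv_right, ne_eq, mul_inv_eq_one] at h1
    · exact fun he => h1 he.symm
    · exact h1
  · intro hr
    refine ⟨fun he => hr (by rw [he]), Or.inl ?_⟩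
    rw [hS]
    simp only [mul_right, inv_right, ne_eq, mul_inv_eq_one]
    exact fun he => hr he.symm

lemma one_ne_zero_zmod (n : ℕ) (hn : 1 < n) [NeZero n] : (1 : ZMod (2*n)) ≠ 0 := by
  intro h
  rw [← Nat.cast_one, ZMod.natCast_eq_zero_iff] at h
  have := Nat.le_of_dvd (by omega) h
  omega

lemma cayley_connected {n : ℕ} [NeZero n] (hn : 1 < n) (S : Set (U6n n))
    (hS : ∀ g : U6n n, g ∈ S ↔ g.right ≠ 1) : (cayleyGraph S).Connected := by
  rw [SimpleGraph.connected_iff]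
  refine ⟨?_, ⟨1⟩⟩
  intro g h
  have adj : ∀ x y : U6n n, x.right ≠ y.right → (cayleyGraph S).Adj x y := by
    intro x y hxy
    rw [cayley_adj_iff S hS]
    exact hxy
  by_cases hr : g.right = h.right
  · by_cases hgh : g = h
    · subst hgh; rfl
    · have h1 : g.right ≠ (aU n * g).right := by
        rw [mul_right, aU, right_inr]
        intro he
        have : (Multiplicative.ofAdd (1 : ZMod (2*n))) = 1 := by
          rw [right_eq_mul] at he
          exact he
        rw [ofAdd_eq_one] at this
        exact one_ne_zero_zmod n hn this
      have h2 : (aU n * g).right ≠ h.right := by rw [← hr]; exact h1.symm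
      exact ((adj g _ h1).reachable).trans ((adj _ h h2).reachable)
  · exact (adj g h hr).reachable

open Polynomial

noncomputable abbrev tK : RatFunc ℂ := algebraMap ℂ[X] (RatFunc ℂ) X

lemma tK_add_three_ne : tK + 3 ≠ 0 := by
  have h3 : (3 : RatFunc ℂ) = algebraMap ℂ[X] (RatFunc ℂ) 3 := (map_ofNat _ 3).symm
  rw [h3, ← map_add]
  intro h
  have h2 := RatFunc.algebraMap_injective ℂ (h.trans (map_zero _).symm)
  have := congrArg (Polynomial.eval (0:ℂ)) h2
  simp at this

noncomputable abbrev Dmat : Matrix (ZMod 3) (ZMod 3) (RatFunc ℂ) :=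
  Matrix.of fun a b => (if a = b then tK else 0) + 1

lemma det_Dmat : Dmat.det = tK^2 * (tK + 3) := by
  have h : Dmat.det = Dmat 0 0 * Dmat 1 1 * Dmat 2 2 - Dmat 0 0 * Dmat 1 2 * Dmat 2 1
      - Dmat 0 1 * Dmat 1 0 * Dmat 2 2 + Dmat 0 1 * Dmat 1 2 * Dmat 2 0
      + Dmat 0 2 * Dmat 1 0 * Dmat 2 1 - Dmat 0 2 * Dmat 1 1 * Dmat 2 0 :=
    Matrix.det_fin_three (R := RatFunc ℂ) Dmat
  refine Eq.trans h ?_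
  norm_num [Dmat, Matrix.of_apply, show ((0:ZMod 3) = 1) = False by decide,
    show ((0:ZMod 3) = 2) = False by decide, show ((1:ZMod 3) = 2) = False by decide,
    show ((1:ZMod 3) = 0) = False by decide, show ((2:ZMod 3) = 0) = False by decide,
    show ((2:ZMod 3) = 1) = False by decide]
  ring

noncomputable abbrev Ap (n : ℕ) : Matrix (ZMod 3 × ZMod (2*n)) (ZMod 3 × ZMod (2*n)) ℂ :=
  Matrix.of fun p q => if p.2 = q.2 then 0 else 1

noncomputable abbrev M0 (n : ℕ) : Matrix (ZMod 3 × ZMod (2*n)) (ZMod 3 × ZMod (2*n)) (RatFunc ℂ) :=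
  Matrix.of fun p q => (if p = q then tK else 0) + (if p.2 = q.2 then 1 else 0)

lemma M0_eq_blockDiagonal (n : ℕ) [NeZero n] :
    M0 n = Matrix.blockDiagonal (fun _ : ZMod (2*n) => Dmat) := by
  ext ⟨p1, p2⟩ ⟨q1, q2⟩
  rw [Matrix.blockDiagonal_apply]
  simp only [M0, Matrix.of_apply, Prod.mk.injEq]
  by_cases h2 : p2 = q2
  · subst h2
    simp [Dmat, Matrix.of_apply]
  · simp [h2]

lemma det_M0 (n : ℕ) [NeZero n] : (M0 n).det = (tK^2 * (tK+3))^(2*n) := by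
  rw [M0_eq_blockDiagonal, Matrix.det_blockDiagonal]
  simp [det_Dmat, Finset.prod_const, ZMod.card]

lemma rowsum_M0 (n : ℕ) [NeZero n] (p : ZMod 3 × ZMod (2*n)) :
    (∑ r, M0 n p r) = tK + 3 := by
  simp only [M0, Matrix.of_apply]
  rw [Finset.sum_add_distrib]
  congr 1
  · simp [Finset.sum_ite_eq]
  · rw [Fintype.sum_prod_type]
    simp [Finset.sum_ite_eq, ZMod.card]

lemma charpoly_Ap (n : ℕ) (hn : 1 < n) [NeZero n] [NeZero (2*n)] :
    (Ap n).charpoly = (X + 3) ^ (2 * n - 1) * X ^ (4 * n) * (X - C (6 * (n : ℂ) - 3)) := by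
  apply RatFunc.algebraMap_injective ℂ
  set φ := algebraMap ℂ[X] (RatFunc ℂ) with hφ
  have hmain : φ (Ap n).charpoly = ((M0 n) * (1 + Matrix.replicateCol Unit (fun _ => -(tK+3)⁻¹) *
      Matrix.replicateRow Unit (fun _ => (1 : RatFunc ℂ)))).det := by
    unfold Matrix.charpoly
    rw [RingHom.map_det]
    congr 1
    rw [Matrix.mul_add, Matrix.mul_one]
    ext p q
    have hmul : (M0 n * (Matrix.replicateCol Unit (fun _ => -(tK+3)⁻¹) *
        Matrix.replicateRow Unit (fun _ => (1 : RatFunc ℂ))) :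
          Matrix (ZMod 3 × ZMod (2*n)) (ZMod 3 × ZMod (2*n)) (RatFunc ℂ)) p q = -1 := by
      rw [Matrix.mul_apply]
      have hc : ∀ r, (Matrix.replicateCol Unit (fun _ : ZMod 3 × ZMod (2*n) => -(tK+3)⁻¹) *
          Matrix.replicateRow Unit (fun _ : ZMod 3 × ZMod (2*n) => (1 : RatFunc ℂ)) :
            Matrix (ZMod 3 × ZMod (2*n)) (ZMod 3 × ZMod (2*n)) (RatFunc ℂ)) r q
            = -(tK+3)⁻¹ := by
        intro r
        rw [Matrix.mul_apply]
        simp [Matrix.replicateCol, Matrix.replicateRow]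
      simp only [hc]
      rw [← Finset.sum_mul, rowsum_M0, mul_neg, mul_inv_cancel₀ tK_add_three_ne]
    rw [RingHom.mapMatrix_apply, Matrix.map_apply, Matrix.add_apply, hmul]
    by_cases hpq : p = q
    · subst hpq
      rw [charmatrix_apply_eq]
      simp [M0, Matrix.of_apply, Ap, hφ, RatFunc.algebraMap_X]
    · rw [charmatrix_apply_ne _ _ _ hpq]
      by_cases h2 : p.2 = q.2
      · simp [M0, Matrix.of_apply, Ap, hpq, h2]
      · simp [M0, Matrix.of_apply, Ap, hpq, h2, Prod.ext_iff]
  rw [hmain, Matrix.det_mul, Matrix.det_one_add_replicateCol_mul_replicateRow, det_M0]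
  have hdot : (fun _ : ZMod 3 × ZMod (2*n) => (1:RatFunc ℂ)) ⬝ᵥ (fun _ => -(tK+3)⁻¹)
      = -(((6*n : ℕ) : RatFunc ℂ) * (tK+3)⁻¹) := by
    simp only [dotProduct, one_mul, Finset.sum_const, Finset.card_univ,
      Fintype.card_prod, ZMod.card, nsmul_eq_mul]
    push_cast
    ring
  rw [hdot]
  have hRHS : φ ((X + 3) ^ (2 * n - 1) * X ^ (4 * n) * (X - C (6 * (n : ℂ) - 3)))
      = (tK + 3) ^ (2*n-1) * tK ^ (4*n) * (tK - (6*((n:ℕ):RatFunc ℂ) - 3)) := by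
    rw [_root_.map_mul, _root_.map_mul, map_pow, map_pow, map_add, map_sub]
    congr 2
    · rw [map_ofNat]
    · congr 1
      simp [RatFunc.algebraMap_C, map_sub, _root_.map_mul, map_ofNat, map_natCast]
  rw [hRHS]
  obtain ⟨m, hm⟩ : ∃ m, 2*n = m + 1 := ⟨2*n-1, by omega⟩
  rw [show 2*n-1 = m by omega, show 4*n = 2*(m+1) by omega, hm]
  have hc : ((6*n:ℕ):RatFunc ℂ) = 6*((n:ℕ):RatFunc ℂ) := by push_cast; ring
  rw [hc]
  have hkey : (tK+3) * (1 + -(6*((n:ℕ):RatFunc ℂ) * (tK+3)⁻¹))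
      = (tK+3) - 6*((n:ℕ):RatFunc ℂ) := by
    rw [mul_add, mul_one, mul_neg, mul_comm (6*((n:ℕ):RatFunc ℂ)) ((tK+3)⁻¹), ← mul_assoc,
      mul_inv_cancel₀ tK_add_three_ne, one_mul, sub_eq_add_neg]
  rw [mul_pow, pow_succ, pow_mul]
  linear_combination ((tK^2)^(m+1) * (tK+3)^m) * hkey

lemma adjMat_reindex {n : ℕ} [NeZero n] (S : Set (U6n n))
    (hS : ∀ g : U6n n, g ∈ S ↔ g.right ≠ 1) :
    Matrix.reindex (u6nEquiv n) (u6nEquiv n) (adjMat (cayleyGraph S)) = Ap n := by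
  ext p q
  rw [Matrix.reindex_apply, Matrix.submatrix_apply]
  simp only [adjMat, Ap, Matrix.of_apply]
  rw [cayley_adj_iff S hS]
  have hL : ((u6nEquiv n).symm p).right = Multiplicative.ofAdd p.2 := rfl
  have hR : ((u6nEquiv n).symm q).right = Multiplicative.ofAdd q.2 := rfl
  rw [hL, hR]
  by_cases h2 : p.2 = q.2
  · simp [h2]
  · simp only [ne_eq, EmbeddingLike.apply_eq_iff_eq]
    simp [h2]

lemma eval_charpoly_of_mem_spectrum {m : Type*} [Fintype m] [DecidableEq m]
    (M : Matrix m m ℂ) {z : ℂ} (hz : z ∈ spectrum ℂ M) : M.charpoly.eval z = 0 := by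
  rw [spectrum.mem_iff] at hz
  by_contra hne
  apply hz
  rw [Matrix.isUnit_iff_isUnit_det, isUnit_iff_ne_zero]
  have hmap : (Matrix.charmatrix M).map (Polynomial.evalRingHom z)
      = algebraMap ℂ (Matrix m m ℂ) z - M := by
    ext i j
    rw [Matrix.map_apply, Matrix.sub_apply]
    by_cases hij : i = j
    · subst hij
      rw [charmatrix_apply_eq]
      simp [Matrix.algebraMap_eq_diagonal, Matrix.diagonal_apply_eq]
    · rw [charmatrix_apply_ne _ _ _ hij]
      simp [Matrix.algebraMap_eq_diagonal, Matrix.diagonal_apply_ne _ hij]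
  rw [← hmap, ← RingHom.mapMatrix_apply, ← RingHom.map_det]
  exact hne

end Aux

/-- Corollary 4.6: for `n > 1`, `S₁ = {a^{2r}, a^{2r}b, a^{2r}b² : 1 ≤ r ≤ n-1}` and
`S₂ = {a^{2h+1}, a^{2h+1}b, a^{2h+1}b² : 0 ≤ h ≤ n-1}`, the graph `Cay(U_{6n}, S₁ ∪ S₂)` is
connected and integral with spectrum `{[-3]^{2n-1}, [0]^{4n}, 6n-3}`. -/
theorem corollary_4_6 (n : ℕ) (hn : 1 < n) (S₁ S₂ : Set (U6n n))
    (hS₁ : S₁ = {x | ∃ r : ℕ, 1 ≤ r ∧ r ≤ n - 1 ∧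
      (x = aU n ^ (2 * r) ∨ x = aU n ^ (2 * r) * bU n ∨ x = aU n ^ (2 * r) * bU n ^ 2)})
    (hS₂ : S₂ = {x | ∃ h : ℕ, h ≤ n - 1 ∧
      (x = aU n ^ (2 * h + 1) ∨ x = aU n ^ (2 * h + 1) * bU n ∨
        x = aU n ^ (2 * h + 1) * bU n ^ 2)}) :
    haveI : NeZero n := ⟨by omega⟩
    (cayleyGraph (S₁ ∪ S₂)).Connected ∧
    IsIntegral (cayleyGraph (S₁ ∪ S₂)) ∧
    (adjMat (cayleyGraph (S₁ ∪ S₂))).charpoly =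
      (X + 3) ^ (2 * n - 1) * X ^ (4 * n) * (X - C (6 * (n : ℂ) - 3)) := by
  haveI : NeZero n := ⟨by omega⟩
  haveI : NeZero (2*n) := ⟨by omega⟩
  have hS : ∀ g : U6n n, g ∈ S₁ ∪ S₂ ↔ g.right ≠ 1 := mem_S_iff n hn S₁ S₂ hS₁ hS₂
  have hchar : (adjMat (cayleyGraph (S₁ ∪ S₂))).charpoly =
      (X + 3) ^ (2 * n - 1) * X ^ (4 * n) * (X - C (6 * (n : ℂ) - 3)) := by
    rw [← charpoly_Ap n hn, ← adjMat_reindex (S₁ ∪ S₂) hS, Matrix.charpoly_reindex]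
  refine ⟨cayley_connected hn _ hS, ?_, hchar⟩
  intro z hz
  have h0 := eval_charpoly_of_mem_spectrum _ hz
  rw [hchar] at h0
  simp only [eval_mul, eval_pow, eval_add, eval_sub, eval_X, eval_C, eval_ofNat] at h0
  rcases mul_eq_zero.mp h0 with h | h
  · rcases mul_eq_zero.mp h with h | h
    · have hz3 := pow_eq_zero_iff (by omega : 2*n-1 ≠ 0) |>.mp h
      refine ⟨-3, ?_⟩
      have := eq_neg_of_add_eq_zero_left hz3
      rw [this]
      push_cast
      ring
    · have hz0 := pow_eq_zero_iff (by omega : 4*n ≠ 0) |>.mp h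
      exact ⟨0, by simp [hz0]⟩
  · refine ⟨6*(n:ℤ) - 3, ?_⟩
    rw [sub_eq_zero.mp h]
    push_cast
    ring

end U6nPaper
end
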